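/- For the Kropina metric φ(s) = 1/s, the value s = β(n) determined by the relations β(n) = ĉβ(N) − γ₁b², γ₁ = −1/(2β(n)), and ĉ = γ₁β(N) + √(1 − γ₁²(b² − β(N)²)) satisfies β(n) = sign(β(N))·√(b(b + |β(N)|)/2). Moreover the discriminant condition 4β(n)² ≥ b² − β(N)² holds automatically. -/

import Mathlib

/-- for the Kropina metric, the value `t = β(n)` determined by
`t = ĉβ(N) − γ₁b²` with `γ₁ = −1/(2t)`, `ĉ = γ₁β(N) + √(1 − γ₁²(b² − β(N)²))`
and having the sign of `β(N)` satisfies `t = sign(β(N))·√(b(b + |β(N)|)/2)`;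
moreover the discriminant condition `4t² ≥ b² − β(N)²` holds automatically. -/
theorem stmt_12 (b βN t : ℝ) (hb : 0 < b) (hβN : βN ≠ 0) (hbβN : |βN| ≤ b)
    (ht0 : t ≠ 0) (hsign : 0 < t * βN)
    (ht : t = (-(1 / (2 * t)) * βN +
        Real.sqrt (1 - (-(1 / (2 * t))) ^ 2 * (b ^ 2 - βN ^ 2))) * βN -
      (-(1 / (2 * t))) * b ^ 2) :
    t = Real.sign βN * Real.sqrt (b * (b + |βN|) / 2) ∧
    b ^ 2 - βN ^ 2 ≤ 4 * t ^ 2 := by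
  have ht2 : (0:ℝ) < t ^ 2 := by positivity
  have hA : 0 ≤ 1 - (-(1 / (2 * t))) ^ 2 * (b ^ 2 - βN ^ 2) := by
    by_contra h
    push_neg at h
    rw [Real.sqrt_eq_zero_of_nonpos h.le] at ht
    have h2 : 2 * t ^ 2 = b ^ 2 - βN ^ 2 := by
      field_simp at ht
      have hx : 2 * t * (2 * t ^ 2 - (b ^ 2 - βN ^ 2)) = 0 := by linear_combination (2 * t) * ht
      rcases mul_eq_zero.mp hx with h' | h'
      · exact absurd (by linarith : t = 0) ht0
      · linarith
    have h3 : (-(1 / (2 * t))) ^ 2 * (b ^ 2 - βN ^ 2) = 1 / 2 := by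
      field_simp
      linear_combination (-1 : ℝ) * h2
    rw [h3] at h
    norm_num at h
  set s : ℝ := Real.sqrt (1 - (-(1 / (2 * t))) ^ 2 * (b ^ 2 - βN ^ 2)) with hs
  have hsnn : 0 ≤ s := Real.sqrt_nonneg _
  have hs2 : s ^ 2 = 1 - (-(1 / (2 * t))) ^ 2 * (b ^ 2 - βN ^ 2) := Real.sq_sqrt hA
  have hE : 2 * t * s * βN = 2 * t ^ 2 - (b ^ 2 - βN ^ 2) := by
    field_simp at ht
    linear_combination -ht
  have hs4 : (2 * t * s) ^ 2 = 4 * t ^ 2 - (b ^ 2 - βN ^ 2) := by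
    have h4 : (2 * t * s) ^ 2 = 4 * t ^ 2 * s ^ 2 := by ring
    rw [h4, hs2]
    field_simp
    ring
  have hF : (2 * t ^ 2 - (b ^ 2 - βN ^ 2)) ^ 2 = βN ^ 2 * (4 * t ^ 2 - (b ^ 2 - βN ^ 2)) := by
    rw [← hE, ← hs4]; ring
  have hG : 0 ≤ 2 * t ^ 2 - (b ^ 2 - βN ^ 2) := by
    rw [← hE]
    nlinarith [mul_nonneg hsign.le hsnn]
  have hm : 0 < |βN| := abs_pos.mpr hβN
  have hm2 : |βN| ^ 2 = βN ^ 2 := sq_abs βN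
  have hfac : (2 * t ^ 2 - b ^ 2 - b * |βN|) * (2 * t ^ 2 - b ^ 2 + b * |βN|) = 0 := by
    linear_combination hF - b ^ 2 * hm2
  have hroot : 2 * t ^ 2 = b ^ 2 + b * |βN| := by
    rcases mul_eq_zero.mp hfac with h | h
    · linarith
    · exfalso
      nlinarith [ht2, hG, hbβN, hm, hm2]
  constructor
  · have hval : b * (b + |βN|) / 2 = t ^ 2 := by linarith
    rw [hval, Real.sqrt_sq_eq_abs]
    rcases lt_or_gt_of_ne hβN with hneg | hpos
    · have hts : t < 0 := by nlinarith [hsign]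
      rw [Real.sign_of_neg hneg, abs_of_neg hts]; ring
    · have hts : 0 < t := by nlinarith [hsign]
      rw [Real.sign_of_pos hpos, abs_of_pos hts]; ring
  · linarith [hroot, (mul_pos hb hm).le, sq_nonneg βN, sq_nonneg b]
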